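/- Let η1, η2p, η2m ∈ ℝ with η2p > 0, η2m > 0 and η1² ≤ η2p + η2m. Define η1p = η2p * (η1 + η2m * Real.sqrt ((η2p + η2m - η1²) / (η2m * η2p))) / (η2m + η2p) and η1m = η2m * (η1 - η2p * Real.sqrt ((η2p + η2m - η1²) / (η2m * η2p))) / (η2m + η2p). Then η1p² / η2p + η1m² / η2m = 1. -/

import Mathlib

theorem dmm2_half_moments_quadratic
    (η1 η2p η2m : ℝ) (h2p : 0 < η2p) (h2m : 0 < η2m)
    (hη1 : η1 ^ 2 ≤ η2p + η2m)
    (η1p η1m : ℝ)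
    (hη1p : η1p = η2p * (η1 + η2m * Real.sqrt ((η2p + η2m - η1 ^ 2) / (η2m * η2p))) / (η2m + η2p))
    (hη1m : η1m = η2m * (η1 - η2p * Real.sqrt ((η2p + η2m - η1 ^ 2) / (η2m * η2p))) / (η2m + η2p)) :
    η1p ^ 2 / η2p + η1m ^ 2 / η2m = 1 := by
  subst hη1p hη1m
  set s := Real.sqrt ((η2p + η2m - η1 ^ 2) / (η2m * η2p)) with hs
  have hs2 : s ^ 2 = (η2p + η2m - η1 ^ 2) / (η2m * η2p) := by
    rw [hs, Real.sq_sqrt]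
    apply div_nonneg (by linarith) (le_of_lt (mul_pos h2m h2p))
  have h : s ^ 2 * (η2m * η2p) = η2p + η2m - η1 ^ 2 := by
    rw [hs2]; field_simp
  field_simp
  linear_combination (η2m + η2p) * h
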